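/- Let F ∈ ℝ[x, y] be an irreducible polynomial with real zero set D = {(x, y) ∈ ℝ² : F(x, y) = 0}, and assume D ∩ (ℝ \ {0})² ≠ ∅. Let l ∈ ℝ \ {0} and let λ ∈ ℝ \ {0} have infinite multiplicative order (i.e., λ^n ≠ 1 for every positive integer n, equivalently λ ∉ {1, −1}). Define the map A : ℝ² → ℝ² by A(x, y) = (x + l, λ y). Then A(D) ≠ D. -/

import Mathlib

noncomputable section

open Polynomial
lemma vanishNat (p : ℝ[X]) (h : ∀ n : ℕ, p.eval (n:ℝ) = 0) : p = 0 := by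
  by_contra hp
  exact Set.infinite_of_injective_forall_mem (f := fun n : ℕ => (n:ℝ))
      Nat.cast_injective (fun n => h n) (Polynomial.finite_setOf_isRoot hp)
lemma Xadd1 : (X + 1 : ℝ[X]) = X + C 1 := by simp
lemma ndXadd : (X + 1 : ℝ[X]).natDegree = 1 := by
  rw [Xadd1]; exact natDegree_X_add_C 1
lemma ndcomp (p : ℝ[X]) : (p.comp (X+1)).natDegree = p.natDegree := by
  simp [Polynomial.natDegree_comp, ndXadd]
lemma lccomp (p : ℝ[X]) : (p.comp (X+1)).leadingCoeff = p.leadingCoeff := by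
  rw [Polynomial.leadingCoeff_comp (by simp [ndXadd]), Xadd1,
    (Polynomial.monic_X_add_C (1:ℝ)), one_pow, mul_one]
lemma compne (p : ℝ[X]) (hp0 : p ≠ 0) : p.comp (X+1) ≠ 0 := fun h => by
  have h2 := lccomp p
  rw [h] at h2; simp at h2
  exact hp0 (Polynomial.leadingCoeff_eq_zero.mp h2.symm)
lemma degdrop (p : ℝ[X]) (d : ℕ) (hp : p.natDegree ≤ d + 1) :
    (p.comp (X+1) - p).natDegree ≤ d := by
  rcases eq_or_ne p 0 with rfl|hp0
  · simp
  rcases eq_or_ne (p.comp (X+1) - p) 0 with h0|h0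
  · simp [h0]
  have hlt : (p.comp (X+1) - p).degree < (p.comp (X+1)).degree := by
    apply Polynomial.degree_sub_lt _ (compne p hp0) (lccomp p)
    rw [Polynomial.degree_eq_natDegree (compne p hp0), Polynomial.degree_eq_natDegree hp0, ndcomp]
  have := Polynomial.natDegree_lt_natDegree h0 hlt
  rw [ndcomp] at this
  omega

lemma qsum (s : Finset ℕ) (μ : ℕ → ℝ) (j0 : ℕ) (p : ℕ → ℝ[X])
    (hsum : ∀ n : ℕ, ∑ j ∈ s, (p j).eval (n:ℝ) * μ j ^ n = 0) (n : ℕ) :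
    ∑ j ∈ s, ((p j).comp (X+1) * C (μ j) - p j * C (μ j0)).eval (n:ℝ) * μ j ^ n = 0 := by
  have h1 := hsum (n+1)
  have h2 := hsum n
  calc ∑ j ∈ s, ((p j).comp (X+1) * C (μ j) - p j * C (μ j0)).eval (n:ℝ) * μ j ^ n
      = ∑ j ∈ s, ((p j).eval ((n:ℝ)+1) * μ j ^ (n+1) - μ j0 * ((p j).eval (n:ℝ) * μ j ^ n)) := by
        apply Finset.sum_congr rfl; intro j hj
        simp [Polynomial.eval_comp, pow_succ]; ring
    _ = 0 := by
        rw [Finset.sum_sub_distrib, ← Finset.mul_sum, h2, mul_zero, sub_zero]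
        push_cast at h1 ⊢
        rw [h1]

lemma otherZero (μ : ℕ → ℝ) (s : Finset ℕ) (hinj : Set.InjOn μ s)
    (j0 : ℕ) (hj0 : j0 ∈ s) (hμj0 : μ j0 ≠ 0) (j : ℕ) (hj : j ∈ s) (hne : j ≠ j0)
    (p : ℝ[X]) (hq : p.comp (X+1) * C (μ j) - p * C (μ j0) = 0) : p = 0 := by
  by_contra hp0
  rw [sub_eq_zero] at hq
  have := congrArg Polynomial.leadingCoeff hq
  rw [Polynomial.leadingCoeff_mul, Polynomial.leadingCoeff_mul, lccomp,
    Polynomial.leadingCoeff_C, Polynomial.leadingCoeff_C] at this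
  have hlc : p.leadingCoeff ≠ 0 := Polynomial.leadingCoeff_ne_zero.mpr hp0
  have : μ j = μ j0 := by
    exact mul_left_cancel₀ hlc this
  exact hne (hinj hj hj0 this)

lemma lastStep (μ : ℕ → ℝ) (s : Finset ℕ) (j0 : ℕ) (hj0 : j0 ∈ s) (hμj0 : μ j0 ≠ 0)
    (p : ℕ → ℝ[X]) (hothers : ∀ j ∈ s, j ≠ j0 → p j = 0)
    (hsum : ∀ n : ℕ, ∑ j ∈ s, (p j).eval (n:ℝ) * μ j ^ n = 0) : p j0 = 0 := by
  apply vanishNat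
  intro n
  have := hsum n
  rw [Finset.sum_eq_single_of_mem j0 hj0 (fun j hj hne => by rw [hothers j hj hne]; simp)] at this
  exact (mul_eq_zero.mp this).resolve_right (pow_ne_zero n hμj0)

lemma expPoly (μ : ℕ → ℝ) (s : Finset ℕ) (hμ0 : ∀ j ∈ s, μ j ≠ 0)
    (hinj : Set.InjOn μ s) (p : ℕ → ℝ[X])
    (hsum : ∀ n : ℕ, ∑ j ∈ s, (p j).eval (n:ℝ) * μ j ^ n = 0) :
    ∀ j ∈ s, p j = 0 := by
  induction s using Finset.strongInduction generalizing p with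
  | _ s ih =>
  rcases s.eq_empty_or_nonempty with rfl|⟨j0, hj0⟩
  · simp
  have hμj0 : μ j0 ≠ 0 := hμ0 j0 hj0
  have key : ∀ (d : ℕ) (p : ℕ → ℝ[X]), (p j0).natDegree ≤ d →
      (∀ n : ℕ, ∑ j ∈ s, (p j).eval (n:ℝ) * μ j ^ n = 0) → ∀ j ∈ s, p j = 0 := by
    intro d
    induction d with
    | zero =>
      intro p hdeg hsum
      set q : ℕ → ℝ[X] := fun j => (p j).comp (X+1) * C (μ j) - p j * C (μ j0) with hq
      have hq0 : q j0 = 0 := by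
        have : p j0 = C ((p j0).coeff 0) := Polynomial.eq_C_of_natDegree_le_zero hdeg
        show (p j0).comp (X+1) * C (μ j0) - p j0 * C (μ j0) = 0
        rw [this, Polynomial.C_comp]; ring
      have hqs := qsum s μ j0 p hsum
      have hqe : ∀ n : ℕ, ∑ j ∈ s.erase j0, (q j).eval (n:ℝ) * μ j ^ n = 0 := by
        intro n
        rw [Finset.sum_erase _ (by rw [hq0]; simp)]
        exact hqs n
      have hall := ih (s.erase j0) (Finset.erase_ssubset hj0)
        (fun j hj => hμ0 j (Finset.mem_of_mem_erase hj))
        (hinj.mono (by intro x hx; exact Finset.mem_of_mem_erase hx)) q hqe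
      have hothers : ∀ j ∈ s, j ≠ j0 → p j = 0 := fun j hj hne =>
        otherZero μ s hinj j0 hj0 hμj0 j hj hne (p j)
          (hall j (Finset.mem_erase.mpr ⟨hne, hj⟩))
      intro j hj
      rcases eq_or_ne j j0 with rfl|hne
      · exact lastStep μ s j hj hμj0 p hothers hsum
      · exact hothers j hj hne
    | succ d hd =>
      intro p hdeg hsum
      set q : ℕ → ℝ[X] := fun j => (p j).comp (X+1) * C (μ j) - p j * C (μ j0) with hq
      have hqdeg : (q j0).natDegree ≤ d := by
        have : q j0 = ((p j0).comp (X+1) - p j0) * C (μ j0) := by rw [hq]; ring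
        rw [this]
        calc (((p j0).comp (X+1) - p j0) * C (μ j0)).natDegree
            ≤ ((p j0).comp (X+1) - p j0).natDegree + (C (μ j0)).natDegree :=
              Polynomial.natDegree_mul_le
          _ ≤ d := by rw [Polynomial.natDegree_C]; simpa using degdrop (p j0) d hdeg
      have hall := hd q hqdeg (qsum s μ j0 p hsum)
      have hothers : ∀ j ∈ s, j ≠ j0 → p j = 0 := fun j hj hne =>
        otherZero μ s hinj j0 hj0 hμj0 j hj hne (p j) (hall j hj)
      intro j hj
      rcases eq_or_ne j j0 with rfl|hne
      · exact lastStep μ s j hj hμj0 p hothers hsum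
      · exact hothers j hj hne
  exact key ((p j0).natDegree) p le_rfl hsum


lemma powInj (lam : ℝ) (hlam : lam ≠ 0) (hord : ∀ n : ℕ, 0 < n → lam ^ n ≠ 1)
    {j k : ℕ} (h : lam ^ j = lam ^ k) : j = k := by
  have H : ∀ j k : ℕ, j < k → lam ^ j = lam ^ k → False := by
    intro j k hlt he
    apply hord (k - j) (by omega)
    have : lam ^ j * lam ^ (k - j) = lam ^ j * 1 := by
      rw [← pow_add, mul_one, he]; congr 1; omega
    exact mul_left_cancel₀ (pow_ne_zero j hlam) this
  rcases lt_trichotomy j k with hlt|he|hlt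
  · exact absurd (H j k hlt h) (by simp)
  · exact he
  · exact absurd (H k j hlt h.symm) (by simp)

theorem stmt5 (F : MvPolynomial (Fin 2) ℝ) (hF : Irreducible F)
    (D : Set (ℝ × ℝ))
    (hD : D = {z : ℝ × ℝ | MvPolynomial.eval ![z.1, z.2] F = 0})
    (hne : ∃ z ∈ D, z.1 ≠ 0 ∧ z.2 ≠ 0)
    (l : ℝ) (hl : l ≠ 0)
    (lam : ℝ) (hlam : lam ≠ 0)
    (hord : ∀ n : ℕ, 0 < n → lam ^ n ≠ 1) :
    (fun z : ℝ × ℝ => (z.1 + l, lam * z.2)) '' D ≠ D := by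
  intro himg
  obtain ⟨⟨a, b⟩, hzD, ha, hb⟩ := hne
  have hstep : ∀ z ∈ D, ((z.1 + l, lam * z.2) : ℝ × ℝ) ∈ D := by
    intro z hz
    rw [← himg]
    exact Set.mem_image_of_mem _ hz
  have hmem : ∀ n : ℕ, ((a + n * l, lam ^ n * b) : ℝ × ℝ) ∈ D := by
    intro n
    induction n with
    | zero => simpa using hzD
    | succ n ihn =>
      have h2 := hstep _ ihn
      have heq : ((a + ((n:ℕ)+1 : ℕ) * l, lam ^ (n+1) * b) : ℝ × ℝ)
          = ((a + (n:ℝ) * l) + l, lam * (lam ^ n * b)) := by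
        rw [Prod.mk.injEq]
        constructor
        · push_cast; ring
        · ring
      rw [heq]
      exact h2
  have heval : ∀ n : ℕ, MvPolynomial.eval ![a + n * l, lam ^ n * b] F = 0 := by
    intro n
    have := hmem n
    rw [hD] at this
    simpa using this
  set s := F.support.image (fun m => m 1) with hs
  set p : ℕ → ℝ[X] := fun j => ∑ m ∈ F.support.filter (fun m => m 1 = j),
      Polynomial.C (MvPolynomial.coeff m F * b ^ j) * (Polynomial.C a + Polynomial.C l * Polynomial.X) ^ (m 0) with hp
  have hsum : ∀ n : ℕ, ∑ j ∈ s, (p j).eval (n:ℝ) * (lam ^ j) ^ n = 0 := by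
    intro n
    have expand : ∀ j, (p j).eval (n:ℝ) = ∑ m ∈ F.support.filter (fun m => m 1 = j),
        MvPolynomial.coeff m F * b ^ j * (a + l * n) ^ (m 0) := by
      intro j
      rw [hp, Polynomial.eval_finset_sum]
      apply Finset.sum_congr rfl
      intro m hm
      rw [Polynomial.eval_mul, Polynomial.eval_C, Polynomial.eval_pow, Polynomial.eval_add,
        Polynomial.eval_C, Polynomial.eval_mul, Polynomial.eval_C, Polynomial.eval_X]
    calc ∑ j ∈ s, (p j).eval (n:ℝ) * (lam ^ j) ^ n
        = ∑ j ∈ s, ∑ m ∈ F.support.filter (fun m => m 1 = j),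
            MvPolynomial.coeff m F * (a + l * n) ^ (m 0) * (lam ^ n * b) ^ (m 1) := by
          apply Finset.sum_congr rfl
          intro j hj
          rw [expand, Finset.sum_mul]
          apply Finset.sum_congr rfl
          intro m hm
          have hmj : m 1 = j := by
            have := (Finset.mem_filter.mp hm).2
            simpa using this
          rw [hmj, mul_pow, pow_right_comm]
          ring
      _ = ∑ m ∈ F.support, MvPolynomial.coeff m F * (a + l * n) ^ (m 0) * (lam ^ n * b) ^ (m 1) :=
          Finset.sum_fiberwise_of_maps_to (fun m hm => Finset.mem_image_of_mem _ hm) _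
      _ = MvPolynomial.eval ![a + n * l, lam ^ n * b] F := by
          rw [MvPolynomial.eval_eq']
          apply Finset.sum_congr rfl
          intro m hm
          rw [Fin.prod_univ_two]
          simp only [Matrix.cons_val_zero, Matrix.cons_val_one, Matrix.head_cons]
          ring
      _ = 0 := heval n
  have hz := expPoly (fun j => lam ^ j) s (fun j _ => pow_ne_zero j hlam)
    (fun j _ k _ h => powInj lam hlam hord h) p hsum
  -- derive F = 0 and contradiction
  have hFne : F ≠ 0 := hF.ne_zero
  obtain ⟨m, hm⟩ := MvPolynomial.support_nonempty.mpr hFne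
  have hjs : m 1 ∈ s := Finset.mem_image_of_mem _ hm
  have hpj := hz (m 1) hjs
  set g : ℝ[X] := (Polynomial.X - Polynomial.C a) * Polynomial.C l⁻¹ with hg
  have hcomp : (Polynomial.C a + Polynomial.C l * Polynomial.X).comp g = Polynomial.X := by
    rw [Polynomial.add_comp, Polynomial.C_comp, Polynomial.mul_comp, Polynomial.C_comp,
      Polynomial.X_comp, hg]
    have h3 : Polynomial.C l * ((Polynomial.X - Polynomial.C a) * Polynomial.C l⁻¹)
        = Polynomial.X - Polynomial.C a := by
      rw [mul_comm (Polynomial.X - Polynomial.C a) (Polynomial.C l⁻¹), ← mul_assoc,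
        ← Polynomial.C_mul, mul_inv_cancel₀ hl, Polynomial.C_1, one_mul]
    rw [h3]
    ring
  have hPX : (∑ m' ∈ F.support.filter (fun m' => m' 1 = m 1),
      Polynomial.C (MvPolynomial.coeff m' F * b ^ (m 1)) * Polynomial.X ^ (m' 0)) = 0 := by
    have h4 : (p (m 1)).comp g = 0 := by rw [hpj]; simp
    rw [hp] at h4
    simp only [Polynomial.comp, Polynomial.eval₂_finset_sum] at h4
    rw [← h4]
    apply Finset.sum_congr rfl
    intro m' hm'
    rw [← Polynomial.comp, Polynomial.mul_comp, Polynomial.C_comp, Polynomial.pow_comp, hcomp]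
  have hc := congrArg (fun q => Polynomial.coeff q (m 0)) hPX
  simp only [Polynomial.finset_sum_coeff, Polynomial.coeff_C_mul, Polynomial.coeff_X_pow,
    Polynomial.coeff_zero, mul_ite, mul_one, mul_zero] at hc
  have hmf : m ∈ F.support.filter (fun m' => m' 1 = m 1) := Finset.mem_filter.mpr ⟨hm, rfl⟩
  rw [Finset.sum_eq_single_of_mem (f := fun x => if m 0 = x 0 then MvPolynomial.coeff x F * b ^ m 1 else 0) m hmf] at hc
  · rw [if_pos rfl] at hc
    have : MvPolynomial.coeff m F = 0 := by
      rcases mul_eq_zero.mp hc with h|h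
      · exact h
      · exact absurd h (pow_ne_zero _ hb)
    exact (MvPolynomial.mem_support_iff.mp hm) this
  · intro m' hm' hne
    rw [if_neg]
    intro h0
    apply hne
    ext i
    fin_cases i
    · exact h0.symm
    · exact (Finset.mem_filter.mp hm').2
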